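/- Every closed walk in H(d,q) (q ≥ 3) based at the all-zeros vertex is ×-homotopic rel endpoints to a finite concatenation of ground walks U_1, ..., U_d and their inverses; i.e., the ground walks generate the fundamental group Π(H(d,q)). -/

import Mathlib

/-- The Hamming graph `H(d,q)`: vertices are functions `Fin d → Fin q`,
adjacent iff they differ in exactly one coordinate. -/
def hammingGraph (d q : ℕ) : SimpleGraph (Fin d → Fin q) where
  Adj v w := ∃! i, v i ≠ w i
  symm := by
    constructor
    rintro v w ⟨i, hi, hu⟩
    exact ⟨i, hi.symm, fun j hj => hu j hj.symm⟩
  loopless := by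
    constructor
    rintro v ⟨i, hi, -⟩
    exact hi rfl

/-- `l` is (the list of vertices of) a walk in `G` from `a` to `b`. -/
def IsWalkOn {V : Type*} (G : SimpleGraph V) (a b : V) (l : List V) : Prop :=
  l.Chain' G.Adj ∧ l.head? = some a ∧ l.getLast? = some b

/-- Elementary moves on walks: prunes (and their inverses, anti-prunes,
via symmetry) and spider moves. -/
inductive Move {V : Type*} (G : SimpleGraph V) : List V → List V → Prop
  | prune (xs ys : List V) (u v : V) (huv : G.Adj u v) :
      Move G (xs ++ u :: v :: u :: ys) (xs ++ u :: ys)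
  | spider (xs ys : List V) (u v v' w : V) (hne : v ≠ v')
      (h1 : G.Adj u v') (h2 : G.Adj v' w) :
      Move G (xs ++ u :: v :: w :: ys) (xs ++ u :: v' :: w :: ys)

/-- ×-homotopy rel endpoints: the equivalence relation generated by prunes,
anti-prunes and spider moves. -/
def Homotopic {V : Type*} (G : SimpleGraph V) : List V → List V → Prop :=
  Relation.EqvGen (Move G)

/-- Concatenation of walks sharing an endpoint. -/
def wcat {V : Type*} (l1 l2 : List V) : List V := l1 ++ l2.tail

/-- Concatenation of a list of closed walks based at `z`. -/
def wprod {V : Type*} (z : V) (ws : List (List V)) : List V := ws.foldr wcat [z]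

/-- `u` and `v` differ exactly in coordinate `i`. -/
def DiffAt {d q : ℕ} (u v : Fin d → Fin q) (i : Fin d) : Prop :=
  u i ≠ v i ∧ ∀ j, j ≠ i → u j = v j

/-- A ground walk in coordinate `i`: a closed 3-walk at the all-zeros vertex
whose intermediate vertices are nonzero only in coordinate `i`. -/
def IsGroundWalk (d q : ℕ) [NeZero q] (i : Fin d) (l : List (Fin d → Fin q)) : Prop :=
  ∃ a b : Fin q, a ≠ 0 ∧ b ≠ 0 ∧ a ≠ b ∧
    l = [(0 : Fin d → Fin q), Function.update (0 : Fin d → Fin q) i a,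
      Function.update (0 : Fin d → Fin q) i b, 0]

/-- Number of steps of a walk in which coordinate `i` changes. -/
def changeCount {d q : ℕ} (i : Fin d) : List (Fin d → Fin q) → ℕ
  | x :: y :: rest => (if x i = y i then 0 else 1) + changeCount i (y :: rest)
  | _ => 0

section Helpers
variable {V : Type*} {G : SimpleGraph V}

lemma move_append (p : List V) {l1 l2 : List V} (h : Move G l1 l2) :
    Move G (p ++ l1) (p ++ l2) := by
  cases h with
  | prune xs ys u v huv =>
      rw [← List.append_assoc, ← List.append_assoc]
      exact .prune (p ++ xs) ys u v huv
  | spider xs ys u v v' w hne h1 h2 =>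
      rw [← List.append_assoc, ← List.append_assoc]
      exact .spider (p ++ xs) ys u v v' w hne h1 h2

lemma homotopic_append_left (p : List V) {l1 l2 : List V} (h : Homotopic G l1 l2) :
    Homotopic G (p ++ l1) (p ++ l2) := by
  induction h with
  | rel a b h => exact .rel _ _ (move_append p h)
  | refl a => exact .refl _
  | symm a b _ ih => exact .symm _ _ ih
  | trans a b c _ _ ih1 ih2 => exact .trans _ _ _ ih1 ih2

lemma move_isWalkOn {a b : V} {l1 l2 : List V} (h : Move G l1 l2)
    (hw : IsWalkOn G a b l1) : IsWalkOn G a b l2 := by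
  obtain ⟨hc, hh, hg⟩ := hw
  cases h with
  | prune xs ys u v huv =>
      unfold List.Chain' at hc
      rw [List.isChain_append] at hc
      obtain ⟨h1, h2, h3⟩ := hc
      rw [List.isChain_cons, List.isChain_cons, List.isChain_cons] at h2
      refine ⟨?_, ?_, ?_⟩
      · unfold List.Chain'
        rw [List.isChain_append, List.isChain_cons]
        refine ⟨h1, ⟨fun y hy => h2.2.2.1 y hy, h2.2.2.2⟩, ?_⟩
        intro x hx y hy
        simp only [List.head?_cons, Option.mem_def, Option.some.injEq] at hy
        exact hy ▸ h3 x hx u (by simp)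
      · rw [List.head?_append] at hh ⊢
        simpa using hh
      · rw [List.getLast?_append_cons] at hg ⊢
        rw [List.getLast?_cons_cons, List.getLast?_cons_cons] at hg
        exact hg
  | spider xs ys u v v' w hne h1 h2 =>
      unfold List.Chain' at hc
      rw [List.isChain_append] at hc
      obtain ⟨hc1, hc2, hc3⟩ := hc
      rw [List.isChain_cons_cons, List.isChain_cons_cons] at hc2
      refine ⟨?_, ?_, ?_⟩
      · unfold List.Chain'
        rw [List.isChain_append, List.isChain_cons_cons, List.isChain_cons_cons]
        refine ⟨hc1, ⟨h1, h2, hc2.2.2⟩, ?_⟩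
        intro x hx y hy
        simp only [List.head?_cons, Option.mem_def, Option.some.injEq] at hy
        exact hy ▸ hc3 x hx u (by simp)
      · rw [List.head?_append] at hh ⊢
        simpa using hh
      · rw [List.getLast?_append_cons] at hg ⊢
        rw [List.getLast?_cons_cons, List.getLast?_cons_cons] at hg ⊢
        exact hg

lemma homotopic_refl (l : List V) : Homotopic G l l := .refl l

end Helpers

section Adj
variable {d q : ℕ}

lemma hamming_adj_update (x : Fin d → Fin q) (i : Fin d) (c : Fin q) (h : c ≠ x i) :
    (hammingGraph d q).Adj x (Function.update x i c) := by
  refine ⟨i, by simp [Ne.symm h], fun j hj => ?_⟩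
  by_contra hji
  exact hj (by rw [Function.update_of_ne hji])

lemma hamming_adj_elim {x y : Fin d → Fin q} (h : (hammingGraph d q).Adj x y) :
    ∃ i, x i ≠ y i ∧ (∀ j, j ≠ i → x j = y j) ∧ y = Function.update x i (y i) := by
  obtain ⟨i, hi, hu⟩ := h
  refine ⟨i, hi, fun j hj => ?_, ?_⟩
  · by_contra hne
    exact hj (hu j hne)
  · funext j
    by_cases hj : j = i
    · subst hj; simp
    · rw [Function.update_of_ne hj]
      by_contra hne
      exact hj (hu j fun he => hne he.symm)

end Adj


def GWGoal (d q : ℕ) [NeZero q] (l : List (Fin d → Fin q)) : Prop :=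
  ∃ ws : List (List (Fin d → Fin q)),
    (∀ w ∈ ws, ∃ i, IsGroundWalk d q i w ∨ IsGroundWalk d q i w.reverse) ∧
    Homotopic (hammingGraph d q) l (wprod 0 ws)

lemma head_dropWhile {α : Type*} (p : α → Bool) :
    ∀ (L : List α) (w : α) (ys : List α), L.dropWhile p = w :: ys → p w = false := by
  intro L
  induction L with
  | nil => intro w ys h; simp [List.dropWhile] at h
  | cons a t ih =>
    intro w ys h
    by_cases hp : p a
    · rw [List.dropWhile_cons, if_pos hp] at h
      exact ih w ys h
    · rw [List.dropWhile_cons, if_neg hp] at h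
      injection h with h1 h2
      subst h1
      simpa using hp

lemma wprod_eq_cons {d q : ℕ} [NeZero q] (ws : List (List (Fin d → Fin q)))
    (h : ∀ w ∈ ws, ∃ i, IsGroundWalk d q i w ∨ IsGroundWalk d q i w.reverse) :
    ∃ t, wprod (0 : Fin d → Fin q) ws = 0 :: t := by
  cases ws with
  | nil => exact ⟨[], rfl⟩
  | cons g gs =>
    obtain ⟨i, hg | hg⟩ := h g List.mem_cons_self
    · obtain ⟨A, B, -, -, -, rfl⟩ := hg
      exact ⟨_, rfl⟩
    · obtain ⟨A, B, -, -, -, hrev⟩ := hg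
      have hgeq : g = [(0 : Fin d → Fin q), Function.update 0 i B,
          Function.update 0 i A, 0] := by
        rw [← List.reverse_reverse g, hrev]
        simp
      subst hgeq
      exact ⟨_, rfl⟩

lemma append_eq_dropLast {α : Type*} (A : List α) (h : A ≠ []) (Z : List α) :
    A ++ Z = A.dropLast ++ A.getLast h :: Z := by
  conv_lhs => rw [← List.dropLast_append_getLast h]
  simp

lemma inner_lemma (d q n : ℕ) [NeZero q] (i : Fin d) (a : Fin q) (ha : a ≠ 0)
    (IH : ∀ l' : List (Fin d → Fin q), l'.length ≤ n →
      IsWalkOn (hammingGraph d q) 0 0 l' → GWGoal d q l')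
    (m : List (Fin d → Fin q)) :
    ∀ (w : Fin d → Fin q) (ys : List (Fin d → Fin q)),
      (0 :: Function.update (0 : Fin d → Fin q) i a :: (m ++ w :: ys)).length ≤ n + 1 →
      IsWalkOn (hammingGraph d q) 0 0
        (0 :: Function.update (0 : Fin d → Fin q) i a :: (m ++ w :: ys)) →
      (∀ x ∈ m, x i = a) → w i ≠ a →
      GWGoal d q (0 :: Function.update (0 : Fin d → Fin q) i a :: (m ++ w :: ys)) := by
  induction m using List.reverseRecOn with
  | nil =>
    intro w ys hlen hl hm hw
    simp only [List.nil_append] at hlen hl ⊢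
    set v : Fin d → Fin q := Function.update (0 : Fin d → Fin q) i a with hv
    have hvi : v i = a := by simp [hv]
    have hadj0v : (hammingGraph d q).Adj 0 v :=
      hamming_adj_update (0 : Fin d → Fin q) i a (by simpa using ha)
    have hchain := hl.1
    unfold List.Chain' at hchain
    rw [List.isChain_cons_cons, List.isChain_cons_cons] at hchain
    have hadjvw : (hammingGraph d q).Adj v w := hchain.2.1
    obtain ⟨k, hk1, hk2, hk3⟩ := hamming_adj_elim hadjvw
    have hki : k = i := by
      by_contra hne
      exact hw (by rw [← hk2 i fun h => hne h.symm, hvi])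
    rw [hki] at hk1 hk2 hk3
    have hwb : w = Function.update (0 : Fin d → Fin q) i (w i) := by
      funext j
      by_cases hj : j = i
      · subst hj; simp
      · rw [Function.update_of_ne hj, ← hk2 j hj, hv, Function.update_of_ne hj]
    by_cases hb0 : w i = 0
    · -- prune: l = 0 :: v :: 0 :: ys ~ 0 :: ys
      have hw0 : w = 0 := by rw [hwb, hb0]; exact Function.update_eq_self i (0 : Fin d → Fin q)
      subst hw0
      have mv : Move (hammingGraph d q) ([] ++ (0 : Fin d → Fin q) :: v :: 0 :: ys)
          ([] ++ (0 : Fin d → Fin q) :: ys) := .prune [] ys 0 v hadj0v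
      simp only [List.nil_append] at mv
      have hl2 : IsWalkOn (hammingGraph d q) 0 0 ((0 : Fin d → Fin q) :: ys) :=
        move_isWalkOn mv hl
      have hlen2 : ((0 : Fin d → Fin q) :: ys).length ≤ n := by
        simp only [List.length_cons] at hlen ⊢; omega
      obtain ⟨ws, h1, h2⟩ := IH _ hlen2 hl2
      exact ⟨ws, h1, .trans _ _ _ (.rel _ _ mv) h2⟩
    · -- extract a ground walk
      have hab : a ≠ w i := fun h => hw h.symm
      have hadj0w : (hammingGraph d q).Adj 0 w := by
        rw [hwb]
        exact hamming_adj_update (0 : Fin d → Fin q) i (w i) (by simpa using hb0)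
      have mv : Move (hammingGraph d q)
          ([(0 : Fin d → Fin q), v] ++ w :: 0 :: w :: ys)
          ([(0 : Fin d → Fin q), v] ++ w :: ys) :=
        .prune [0, v] ys w 0 hadj0w.symm
      have h1 : Homotopic (hammingGraph d q) ((0 : Fin d → Fin q) :: v :: w :: ys)
          ([(0 : Fin d → Fin q), v, w] ++ (0 :: w :: ys)) := by
        refine .symm _ _ (.rel _ _ ?_)
        simpa using mv
      have hl2 : IsWalkOn (hammingGraph d q) 0 0 ((0 : Fin d → Fin q) :: w :: ys) := by
        refine ⟨?_, rfl, ?_⟩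
        · unfold List.Chain'
          rw [List.isChain_cons_cons]
          exact ⟨hadj0w, hchain.2.2⟩
        · have := hl.2.2
          rw [List.getLast?_cons_cons, List.getLast?_cons_cons] at this
          rw [List.getLast?_cons_cons]
          exact this
      have hlen2 : ((0 : Fin d → Fin q) :: w :: ys).length ≤ n := by
        simp only [List.length_cons] at hlen ⊢; omega
      obtain ⟨ws, hws, hhom⟩ := IH _ hlen2 hl2
      refine ⟨[(0 : Fin d → Fin q), v, w, 0] :: ws, ?_, ?_⟩
      · intro w' hw'
        rcases List.mem_cons.mp hw' with h | h
        · exact ⟨i, Or.inl ⟨a, w i, ha, hb0, hab, by rw [h, hv, ← hwb]⟩⟩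
        · exact hws w' h
      · obtain ⟨t, ht⟩ := wprod_eq_cons ws hws
        have e : wprod (0 : Fin d → Fin q) ([(0 : Fin d → Fin q), v, w, 0] :: ws)
            = [(0 : Fin d → Fin q), v, w] ++ wprod 0 ws := by
          rw [show wprod (0 : Fin d → Fin q) ([(0 : Fin d → Fin q), v, w, 0] :: ws)
            = wcat [(0 : Fin d → Fin q), v, w, 0] (wprod 0 ws) from rfl, wcat, ht]
          simp
        rw [e]
        exact .trans _ _ _ h1 (homotopic_append_left [0, v, w] hhom)
  | append_singleton m' y ihm =>
    intro w ys hlen hl hm hw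
    set v : Fin d → Fin q := Function.update (0 : Fin d → Fin q) i a with hv
    simp only [List.append_assoc, List.singleton_append] at hlen hl ⊢
    have hXne : ((0 : Fin d → Fin q) :: v :: m') ≠ [] := List.cons_ne_nil _ _
    set u := ((0 : Fin d → Fin q) :: v :: m').getLast hXne with hu
    have hXd : ((0 : Fin d → Fin q) :: v :: m').dropLast ++ [u]
        = (0 : Fin d → Fin q) :: v :: m' := List.dropLast_append_getLast hXne
    have hL : (0 : Fin d → Fin q) :: v :: (m' ++ y :: w :: ys)
        = ((0 : Fin d → Fin q) :: v :: m').dropLast ++ u :: y :: w :: ys := by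
      have h1 : (0 : Fin d → Fin q) :: v :: (m' ++ y :: w :: ys)
          = ((0 : Fin d → Fin q) :: v :: m') ++ y :: w :: ys := by simp
      rw [h1]
      exact append_eq_dropLast _ hXne _
    have hui : u i = a := by
      have hgl : u = (v :: m').getLast (List.cons_ne_nil _ _) := by
        rw [hu]; exact List.getLast_cons _
      have hmem := List.getLast_mem (List.cons_ne_nil v m')
      rw [← hgl] at hmem
      rcases List.mem_cons.mp hmem with h | h
      · rw [h, hv]; simp
      · exact hm u (List.mem_append_left _ h)
    have hyi : y i = a := hm y (by simp)
    have hchain := hl.1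
    unfold List.Chain' at hchain
    rw [hL, List.isChain_append] at hchain
    have hc2 := hchain.2.1
    rw [List.isChain_cons_cons, List.isChain_cons_cons] at hc2
    have hadjuy : (hammingGraph d q).Adj u y := hc2.1
    have hadjyw : (hammingGraph d q).Adj y w := hc2.2.1
    obtain ⟨j, hj1, hj2, hj3⟩ := hamming_adj_elim hadjuy
    have hji : j ≠ i := fun h => hj1 (by rw [h, hui, hyi])
    obtain ⟨k, hk1, hk2, hk3⟩ := hamming_adj_elim hadjyw
    have hki : k = i := by
      by_contra hne
      exact hw (by rw [← hk2 i fun h => hne h.symm, hyi])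
    rw [hki] at hk1 hk2 hk3
    set y' : Fin d → Fin q := Function.update u i (w i) with hy'
    have hy'i : y' i = w i := by simp [hy']
    have hy'ne : y ≠ y' := by
      intro h
      apply hw
      rw [← hy'i, ← h, hyi]
    have hadjuy' : (hammingGraph d q).Adj u y' :=
      hamming_adj_update u i (w i) (by rw [hui]; exact hw)
    have hadjy'w : (hammingGraph d q).Adj y' w := by
      refine ⟨j, ?_, ?_⟩
      · show Function.update u i (w i) j ≠ w j
        rw [Function.update_of_ne hji, ← hk2 j hji]
        exact hj1
      · intro t ht
        by_contra htj
        by_cases hti : t = i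
        · subst hti
          exact ht hy'i
        · exact ht (by rw [show y' t = Function.update u i (w i) t from rfl,
            Function.update_of_ne hti, hj2 t htj, hk2 t hti])
    have mv : Move (hammingGraph d q)
        (((0 : Fin d → Fin q) :: v :: m').dropLast ++ u :: y :: w :: ys)
        (((0 : Fin d → Fin q) :: v :: m').dropLast ++ u :: y' :: w :: ys) :=
      .spider _ ys u y y' w hy'ne hadjuy' hadjy'w
    have hL2 : ((0 : Fin d → Fin q) :: v :: m').dropLast ++ u :: y' :: w :: ys
        = (0 : Fin d → Fin q) :: v :: (m' ++ y' :: w :: ys) := by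
      have h1 : (0 : Fin d → Fin q) :: v :: (m' ++ y' :: w :: ys)
          = ((0 : Fin d → Fin q) :: v :: m') ++ y' :: w :: ys := by simp
      rw [h1]
      exact (append_eq_dropLast _ hXne _).symm
    have hl2 : IsWalkOn (hammingGraph d q) 0 0
        ((0 : Fin d → Fin q) :: v :: (m' ++ y' :: w :: ys)) := by
      rw [← hL2]
      exact move_isWalkOn mv (hL ▸ hl)
    have hlen2 : ((0 : Fin d → Fin q) :: v :: (m' ++ y' :: w :: ys)).length ≤ n + 1 := by
      simp only [List.length_cons, List.length_append] at hlen ⊢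
      omega
    obtain ⟨ws, h1, h2⟩ := ihm y' (w :: ys) hlen2 hl2
      (fun x hx => hm x (List.mem_append_left _ hx)) (by rw [hy'i]; exact hw)
    refine ⟨ws, h1, .trans _ _ _ ?_ h2⟩
    rw [hL, ← hL2]
    exact .rel _ _ mv

lemma main_lemma (d q : ℕ) [NeZero q] :
    ∀ (n : ℕ) (l : List (Fin d → Fin q)), l.length ≤ n →
      IsWalkOn (hammingGraph d q) 0 0 l → GWGoal d q l := by
  intro n
  induction n with
  | zero =>
    intro l hlen hl
    cases l with
    | nil => exact absurd hl.2.1 (by simp)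
    | cons a t => simp at hlen
  | succ n IHn =>
    intro l hlen hl
    match l with
    | [] => exact absurd hl.2.1 (by simp)
    | [x] =>
      have hx : x = 0 := by have := hl.2.1; simp at this; exact this
      subst hx
      exact ⟨[], by simp, .refl _⟩
    | x :: y :: t =>
      have hx : x = 0 := by have := hl.2.1; simp at this; exact this
      subst hx
      have hadj : (hammingGraph d q).Adj 0 y := (List.isChain_cons_cons.mp hl.1).1
      obtain ⟨i0, hi, hj, hy⟩ := hamming_adj_elim hadj
      have ha : y i0 ≠ 0 := fun h => hi (by simp [h])
      cases t with
      | nil =>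
        exfalso
        have hg := hl.2.2
        simp [List.getLast?] at hg
        exact ha (by rw [hg]; simp)
      | cons z t =>
        have hlast : (z :: t).getLast? = some 0 := by
          have := hl.2.2
          rwa [List.getLast?_cons_cons, List.getLast?_cons_cons] at this
        have hlastmem : (0 : Fin d → Fin q) ∈ z :: t := by
          have h0 : (z :: t).getLast (List.cons_ne_nil _ _) = 0 := by
            have h' := List.getLast?_eq_getLast (List.cons_ne_nil z t)
            rw [h'] at hlast
            exact Option.some_injective _ hlast
          rw [← h0]; exact List.getLast_mem _
        set p : (Fin d → Fin q) → Bool := fun x => decide (x i0 = y i0) with hp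
        have hdw : (z :: t).dropWhile p ≠ [] := fun hnil => by
          rw [List.dropWhile_eq_nil_iff] at hnil
          have h2 := hnil 0 hlastmem
          simp only [hp, decide_eq_true_eq, Pi.zero_apply] at h2
          exact ha h2.symm
        obtain ⟨w, ys, hwys⟩ : ∃ w ys, (z :: t).dropWhile p = w :: ys := by
          cases h : (z :: t).dropWhile p with
          | nil => exact absurd h hdw
          | cons a b => exact ⟨a, b, rfl⟩
        have hsplit : (z :: t).takeWhile p ++ w :: ys = z :: t := by
          rw [← hwys]; exact List.takeWhile_append_dropWhile
        have hm : ∀ x ∈ (z :: t).takeWhile p, x i0 = y i0 := fun x hx => by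
          have := List.mem_takeWhile_imp hx
          simpa [hp] using this
        have hwne : w i0 ≠ y i0 := by
          have := head_dropWhile p (z :: t) w ys hwys
          simp only [hp, decide_eq_false_iff_not] at this
          exact this
        have heq : (0 : Fin d → Fin q) :: y :: z :: t
            = 0 :: Function.update (0 : Fin d → Fin q) i0 (y i0)
              :: ((z :: t).takeWhile p ++ w :: ys) := by
          rw [hsplit, ← hy]
        rw [heq] at hl hlen ⊢
        exact inner_lemma d q n i0 (y i0) ha (fun l' h1 h2 => IHn l' h1 h2)
          _ w ys hlen hl hm hwne


/-- every closed walk in `H(d,q)` (`q ≥ 3`) based at the all-zeros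
vertex is ×-homotopic rel endpoints to a finite concatenation of ground walks and
their inverses: the ground walks generate the fundamental group. -/
theorem stmt15 (d q : ℕ) [NeZero q] (hq : 3 ≤ q)
    (l : List (Fin d → Fin q)) (hl : IsWalkOn (hammingGraph d q) 0 0 l) :
    ∃ ws : List (List (Fin d → Fin q)),
      (∀ w ∈ ws, ∃ i, IsGroundWalk d q i w ∨ IsGroundWalk d q i w.reverse) ∧
      Homotopic (hammingGraph d q) l (wprod 0 ws) :=
  main_lemma d q l.length l le_rfl hl
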